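/- Let S_a ⊂ [0,1]^n be the modified Sierpinski carpet obtained by, at stage m, subdividing each remaining cube into a_m^{-n} congruent closed subcubes (where a_m is the reciprocal of an odd integer greater than 1) and removing the interior of the central one. Then the n-dimensional Lebesgue measure of S_a equals lim_{m→∞} (1-a_1^n)⋯(1-a_m^n), and this measure is positive if and only if the sequence (a_m) belongs to ℓ^n, i.e., ∑_m a_m^n < ∞. -/

import Mathlib

open MeasureTheory Filter Set
open scoped ENNReal

/-- The closed subcube with index `v` of the cube with lower corner `c` and side
length `s`, after subdivision into `k^n` congruent subcubes. -/
def subCube {n : ℕ} (c : Fin n → ℝ) (s : ℝ) (k : ℕ) (v : Fin n → Fin k) :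
    Set (Fin n → ℝ) :=
  Set.Icc (fun i => c i + (v i : ℝ) * (s / k)) (fun i => c i + (v i : ℝ) * (s / k) + s / k)

/-- The (lower corner, side length) data of the cubes remaining at stage `m` of the
construction of the modified Sierpinski carpet in `[0,1]^n`, where at stage `m+1`
each remaining cube is subdivided into `(2 * b m + 1)^n` congruent closed subcubes
(so `a m = 1 / (2 * b m + 1)` is the reciprocal of an odd integer) and the central
one (of index `fun _ => b m`) is removed. -/
def carpetPieces (n : ℕ) (b : ℕ → ℕ) : ℕ → Set ((Fin n → ℝ) × ℝ)
  | 0 => {(fun _ => (0 : ℝ), (1 : ℝ))}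
  | m + 1 => ⋃ p ∈ carpetPieces n b m,
      { q | ∃ v : Fin n → Fin (2 * b m + 1),
          v ≠ (fun _ => ⟨b m, by omega⟩) ∧
          q = (fun i => p.1 i + (v i : ℝ) * (p.2 / (2 * b m + 1)), p.2 / (2 * b m + 1)) }

/-- The level-`m` precarpet: the union of the cubes remaining at stage `m`. -/
def precarpet (n : ℕ) (b : ℕ → ℕ) (m : ℕ) : Set (Fin n → ℝ) :=
  ⋃ p ∈ carpetPieces n b m, Set.Icc p.1 (fun i => p.1 i + p.2)

/-- The modified Sierpinski carpet `S_a` with `a m = 1 / (2 * b m + 1)`. -/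
def sierpinskiCarpet (n : ℕ) (b : ℕ → ℕ) : Set (Fin n → ℝ) :=
  ⋂ m, precarpet n b m


lemma volume_cube {n : ℕ} (c : Fin n → ℝ) {s : ℝ} (hs : 0 ≤ s) :
    volume (Set.Icc c (fun i => c i + s)) = ENNReal.ofReal (s ^ n) := by
  rw [Real.volume_Icc_pi, ENNReal.ofReal_pow hs]
  simp

lemma volume_subCube {n : ℕ} (c : Fin n → ℝ) {s : ℝ} (hs : 0 ≤ s) {k : ℕ} (hk : 0 < k)
    (v : Fin n → Fin k) :
    volume (subCube c s k v) = ENNReal.ofReal ((s / k) ^ n) := by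
  have ht : (0:ℝ) ≤ s / k := by positivity
  rw [subCube, Real.volume_Icc_pi, ENNReal.ofReal_pow ht]
  simp

lemma subCube_subset {n : ℕ} (c : Fin n → ℝ) {s : ℝ} (hs : 0 ≤ s) {k : ℕ} (hk : 0 < k)
    (v : Fin n → Fin k) :
    subCube c s k v ⊆ Set.Icc c (fun i => c i + s) := by
  have ht : (0:ℝ) ≤ s / k := by positivity
  intro x hx
  obtain ⟨h1, h2⟩ := hx
  constructor <;> intro i
  · have := h1 i
    have hv : (0:ℝ) ≤ (v i : ℝ) := by positivity
    dsimp at this ⊢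
    nlinarith
  · have := h2 i
    have hv : ((v i : ℝ) + 1) ≤ (k : ℝ) := by
      have := (v i).isLt
      exact_mod_cast this
    have hkk : (k:ℝ) * (s / k) = s := by field_simp
    have : x i ≤ c i + ((v i : ℝ) + 1) * (s / k) := by dsimp at this ⊢; linarith
    dsimp
    nlinarith

lemma subCube_aedisjoint {n : ℕ} (c : Fin n → ℝ) {s : ℝ} (hs : 0 ≤ s) {k : ℕ}
    {v w : Fin n → Fin k} (hvw : v ≠ w) :
    volume (subCube c s k v ∩ subCube c s k w) = 0 := by
  obtain ⟨i, hi⟩ := Function.ne_iff.mp hvw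
  have ht : (0:ℝ) ≤ s / k := by positivity
  rw [subCube, subCube, Set.Icc_inter_Icc, Real.volume_Icc_pi]
  refine Finset.prod_eq_zero (Finset.mem_univ i) ?_
  rw [ENNReal.ofReal_eq_zero]
  have key : ∀ x y : Fin k, x < y →
      (min (c i + (x:ℝ) * (s/k) + s/k) (c i + (y:ℝ) * (s/k) + s/k))
      - max (c i + (x:ℝ) * (s/k)) (c i + (y:ℝ) * (s/k)) ≤ 0 := by
    intro x y hxy
    have h1 : (x:ℝ) + 1 ≤ (y:ℝ) := by exact_mod_cast hxy
    have h2 : min (c i + (x:ℝ) * (s/k) + s/k) (c i + (y:ℝ) * (s/k) + s/k)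
        ≤ c i + (x:ℝ) * (s/k) + s/k := min_le_left _ _
    have h3 : c i + (y:ℝ) * (s/k) ≤ max (c i + (x:ℝ) * (s/k)) (c i + (y:ℝ) * (s/k)) :=
      le_max_right _ _
    nlinarith
  rcases lt_or_gt_of_ne hi with h | h
  · have := key _ _ h
    simpa using this
  · have := key _ _ h
    have hcomm : min (c i + (w i:ℝ) * (s/k) + s/k) (c i + (v i:ℝ) * (s/k) + s/k)
      - max (c i + (w i:ℝ) * (s/k)) (c i + (v i:ℝ) * (s/k)) ≤ 0 := this
    simp only [Pi.sup_apply, Pi.inf_apply]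
    rw [min_comm, max_comm] at hcomm
    exact hcomm

lemma carpet_struct (n : ℕ) (b : ℕ → ℕ) (m : ℕ) :
    ∃ F : Finset ((Fin n → ℝ) × ℝ),
      carpetPieces n b m = ↑F ∧
      (∀ p ∈ F, p.2 = ∏ j ∈ Finset.range m, (((2 * b j + 1 : ℕ) : ℝ))⁻¹) ∧
      (∀ p ∈ F, ∀ q ∈ F, p ≠ q →
        volume (Set.Icc p.1 (fun i => p.1 i + p.2) ∩ Set.Icc q.1 (fun i => q.1 i + q.2)) = 0) ∧
      volume (precarpet n b m) =
        ENNReal.ofReal (∏ j ∈ Finset.range m, (1 - (((2 * b j + 1 : ℕ) : ℝ))⁻¹ ^ n)) := by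
  classical
  induction m with
  | zero =>
    refine ⟨{(fun _ => (0 : ℝ), (1 : ℝ))}, ?_, ?_, ?_, ?_⟩
    · simp [carpetPieces]
    · simp
    · simp
    · rw [precarpet]
      show volume (⋃ p ∈ ({(fun _ => (0 : ℝ), (1 : ℝ))} : Set ((Fin n → ℝ) × ℝ)), _) = _
      rw [Set.biUnion_singleton]
      simpa using volume_cube (fun _ => (0:ℝ)) (le_of_lt one_pos)
  | succ m IH =>
    obtain ⟨F, hcoe, hside, hdisj, hvol⟩ := IH
    set k := 2 * b m + 1 with hkdef
    have hk : 0 < k := by omega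
    set s : ℝ := ∏ j ∈ Finset.range m, (((2 * b j + 1 : ℕ) : ℝ))⁻¹ with hsdef
    have hs : 0 < s := Finset.prod_pos fun j _ => by positivity
    set center : Fin n → Fin k := (fun _ => ⟨b m, by omega⟩) with hcenter
    set child : ((Fin n → ℝ) × ℝ) → (Fin n → Fin k) → ((Fin n → ℝ) × ℝ) :=
      fun p v => (fun i => p.1 i + (v i : ℝ) * (p.2 / k), p.2 / k) with hchild
    set V : Finset (Fin n → Fin k) := Finset.univ.erase center with hV
    set F' : Finset ((Fin n → ℝ) × ℝ) := F.biUnion (fun p => V.image (child p)) with hF'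
    have hmemF' : ∀ q, q ∈ F' ↔ ∃ p ∈ F, ∃ v, v ≠ center ∧ q = child p v := by
      intro q
      simp only [hF', Finset.mem_biUnion, Finset.mem_image, hV, Finset.mem_erase,
        Finset.mem_univ, and_true, eq_comm]
    have hpieces : carpetPieces n b (m + 1) = ↑F' := by
      ext q
      rw [show carpetPieces n b (m+1) = ⋃ p ∈ carpetPieces n b m,
        { q | ∃ v : Fin n → Fin (2 * b m + 1),
          v ≠ (fun _ => ⟨b m, by omega⟩) ∧
          q = (fun i => p.1 i + (v i : ℝ) * (p.2 / (2 * b m + 1)), p.2 / (2 * b m + 1)) } from rfl]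
      have hkr : ((k:ℕ):ℝ) = 2 * (b m : ℝ) + 1 := by rw [hkdef]; push_cast; ring
      simp only [hcoe, Set.mem_iUnion, Set.mem_setOf_eq, Finset.mem_coe, hmemF', exists_prop,
        hchild, hcenter, hkr]
      exact Iff.rfl
    -- side lengths
    have hside' : ∀ p ∈ F', p.2 = ∏ j ∈ Finset.range (m+1), (((2 * b j + 1 : ℕ) : ℝ))⁻¹ := by
      intro q hq
      obtain ⟨p, hp, v, hv, rfl⟩ := (hmemF' q).mp hq
      rw [Finset.prod_range_succ, ← hsdef]
      show p.2 / k = s * (↑(2 * b m + 1))⁻¹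
      rw [hside p hp, ← hkdef, div_eq_mul_inv]
    -- the cube of a child is a subCube
    have hcube_child : ∀ p v, Set.Icc (child p v).1 (fun i => (child p v).1 i + (child p v).2)
        = subCube p.1 p.2 k v := fun p v => rfl
    -- disjointness
    have hdisj' : ∀ p ∈ F', ∀ q ∈ F', p ≠ q →
        volume (Set.Icc p.1 (fun i => p.1 i + p.2) ∩ Set.Icc q.1 (fun i => q.1 i + q.2)) = 0 := by
      intro q hq q' hq' hne
      obtain ⟨p, hp, v, hv, rfl⟩ := (hmemF' q).mp hq
      obtain ⟨p', hp', v', hv', rfl⟩ := (hmemF' q').mp hq'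
      have hps : (0:ℝ) ≤ p.2 := by rw [hside p hp]; exact hs.le
      by_cases hpp : p = p'
      · subst hpp
        have hvv : v ≠ v' := by rintro rfl; exact hne rfl
        rw [hcube_child, hcube_child]
        exact subCube_aedisjoint p.1 hps hvv
      · have hps' : (0:ℝ) ≤ p'.2 := by rw [hside p' hp']; exact hs.le
        refine measure_mono_null ?_ (hdisj p hp p' hp' hpp)
        rw [hcube_child, hcube_child]
        exact Set.inter_subset_inter (subCube_subset p.1 hps hk v) (subCube_subset p'.1 hps' hk v')
    refine ⟨F', hpieces, hside', hdisj', ?_⟩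
    -- volume computation
    have hre : precarpet n b (m+1) = ⋃ p ∈ F, ⋃ v ∈ V, subCube p.1 p.2 k v := by
      rw [precarpet, hpieces]
      ext x
      simp only [Finset.mem_coe, Set.mem_iUnion, exists_prop, hmemF']
      constructor
      · rintro ⟨q, ⟨p, hp, v, hv, rfl⟩, hx⟩
        exact ⟨p, hp, v, by simp [hV, hv], by rwa [hcube_child] at hx⟩
      · rintro ⟨p, hp, v, hv, hx⟩
        have hv' : v ≠ center := by simp [hV] at hv; exact hv
        exact ⟨child p v, ⟨p, hp, v, hv', rfl⟩, by rwa [hcube_child]⟩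
    rw [hre]
    have hUmeas : ∀ p : (Fin n → ℝ) × ℝ, MeasurableSet (⋃ v ∈ V, subCube p.1 p.2 k v) := by
      intro p
      exact MeasurableSet.biUnion V.countable_toSet fun v _ => measurableSet_Icc
    have houter : volume (⋃ p ∈ F, ⋃ v ∈ V, subCube p.1 p.2 k v)
        = ∑ p ∈ F, volume (⋃ v ∈ V, subCube p.1 p.2 k v) := by
      refine measure_biUnion_finset₀ ?_ fun p _ => (hUmeas p).nullMeasurableSet
      intro p hp q hq hne
      have hps : (0:ℝ) ≤ p.2 := by rw [hside p hp]; exact hs.le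
      have hqs : (0:ℝ) ≤ q.2 := by rw [hside q hq]; exact hs.le
      refine measure_mono_null (Set.inter_subset_inter ?_ ?_) (hdisj p hp q hq hne) <;>
        exact Set.iUnion₂_subset fun v _ => subCube_subset _ (by assumption) hk v
    have hinner : ∀ p ∈ F, volume (⋃ v ∈ V, subCube p.1 p.2 k v)
        = (V.card : ℝ≥0∞) * ENNReal.ofReal ((p.2 / k) ^ n) := by
      intro p hp
      have hps : (0:ℝ) ≤ p.2 := by rw [hside p hp]; exact hs.le
      have hsum := measure_biUnion_finset₀ (μ := volume) (s := V)
        (f := fun v => subCube p.1 p.2 k v)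
        (fun v _ w _ hvw => subCube_aedisjoint p.1 hps hvw)
        (fun v _ => measurableSet_Icc.nullMeasurableSet)
      rw [hsum, Finset.sum_congr rfl fun v _ => volume_subCube p.1 hps hk v,
        Finset.sum_const, nsmul_eq_mul]
    rw [houter, Finset.sum_congr rfl hinner]
    -- cardinality of V
    have hcard : V.card = k ^ n - 1 := by
      rw [hV, Finset.card_erase_of_mem (Finset.mem_univ _), Finset.card_univ]
      simp [Fintype.card_fun]
    -- volume of precarpet m via IH
    have hvolm : ∑ p ∈ F, ENNReal.ofReal (p.2 ^ n)
        = ENNReal.ofReal (∏ j ∈ Finset.range m, (1 - (((2 * b j + 1 : ℕ) : ℝ))⁻¹ ^ n)) := by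
      rw [← hvol, precarpet, hcoe, Finset.set_biUnion_coe]
      have hsum := measure_biUnion_finset₀ (μ := volume) (s := F)
        (f := fun p : (Fin n → ℝ) × ℝ => Set.Icc p.1 (fun i => p.1 i + p.2))
        (fun p hp q hq hne => hdisj p hp q hq hne)
        (fun p _ => measurableSet_Icc.nullMeasurableSet)
      rw [hsum]
      exact (Finset.sum_congr rfl fun p hp => (volume_cube p.1 (by rw [hside p hp]; exact hs.le))).symm
    -- key real identity
    have hfactor : ∀ p ∈ F, (V.card : ℝ≥0∞) * ENNReal.ofReal ((p.2 / k) ^ n)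
        = ENNReal.ofReal (p.2 ^ n) * ENNReal.ofReal (1 - (((2 * b m + 1 : ℕ) : ℝ))⁻¹ ^ n) := by
      intro p hp
      have hps : (0:ℝ) ≤ p.2 := by rw [hside p hp]; exact hs.le
      have hone : (1:ℕ) ≤ k ^ n := Nat.one_le_pow _ _ hk
      have hkinv : (0:ℝ) ≤ 1 - ((k:ℕ):ℝ)⁻¹ ^ n := by
        have h1 : ((k:ℕ):ℝ)⁻¹ ≤ 1 := by
          rw [inv_le_one_iff₀]; right; exact_mod_cast hk
        have := pow_le_one₀ (by positivity) h1 (n := n)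
        linarith
      rw [hcard, ← ENNReal.ofReal_natCast, ← ENNReal.ofReal_mul (by positivity),
        ← ENNReal.ofReal_mul (by positivity)]
      congr 1
      have hkr : (0:ℝ) < (k:ℝ) := by exact_mod_cast hk
      rw [Nat.cast_sub hone]
      push_cast
      rw [div_pow]
      field_simp
      have hk' : (2 * (b m : ℝ) + 1) = (k : ℝ) := by rw [hkdef]; push_cast; ring
      have hK : (k : ℝ) ^ n ≠ 0 := by positivity
      rw [hk', one_div, inv_pow, mul_sub, mul_one, mul_right_comm, mul_inv_cancel₀ hK, sub_mul,
        one_mul]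
    rw [Finset.sum_congr rfl hfactor, ← Finset.sum_mul, hvolm, Finset.prod_range_succ,
      ENNReal.ofReal_mul]
    exact Finset.prod_nonneg fun j hj => by
      have h1 : (((2 * b j + 1 : ℕ):ℝ))⁻¹ ≤ 1 := by
        rw [inv_le_one_iff₀]; right; exact_mod_cast Nat.succ_le_of_lt (by omega)
      have := pow_le_one₀ (a := (((2 * b j + 1 : ℕ):ℝ))⁻¹) (by positivity) h1 (n := n)
      linarith

lemma exp_neg_two_le {y : ℝ} (h0 : 0 ≤ y) (h1 : y ≤ 3⁻¹) : Real.exp (-(2 * y)) ≤ 1 - y := by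
  have he := Real.add_one_le_exp (2 * y)
  have hpos := Real.exp_pos (2 * y)
  have h2 : 1 ≤ (1 - y) * Real.exp (2 * y) := by nlinarith
  rw [Real.exp_neg]
  nlinarith [mul_nonneg (inv_nonneg.mpr hpos.le)
      (by linarith : (0:ℝ) ≤ (1 - y) * Real.exp (2 * y) - 1),
    inv_mul_cancel₀ hpos.ne']


/-- The `n`-dimensional Lebesgue measure of the modified Sierpinski carpet equals
`lim_{m → ∞} (1 - a 0 ^ n) ⋯ (1 - a (m-1) ^ n)` where `a m = 1/(2 * b m + 1)`, and
this measure is positive if and only if `(a m) ∈ ℓ^n`, i.e. `∑ m, a m ^ n < ∞`. -/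
theorem sierpinskiCarpet_volume (n : ℕ) (hn : 1 ≤ n) (b : ℕ → ℕ) (hb : ∀ m, 1 ≤ b m)
    (a : ℕ → ℝ) (hab : ∀ m, a m = ((2 * b m + 1 : ℕ) : ℝ)⁻¹) :
    Filter.Tendsto (fun m => ∏ j ∈ Finset.range m, (1 - a j ^ n)) Filter.atTop
      (nhds (volume (sierpinskiCarpet n b)).toReal) ∧
    (0 < volume (sierpinskiCarpet n b) ↔ Summable (fun m => a m ^ n)) := by
  classical
  -- basic bounds on a and x := a ^ n
  have ha0 : ∀ j, 0 < a j := by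
    intro j; rw [hab]; positivity
  have ha3 : ∀ j, a j ≤ 3⁻¹ := by
    intro j; rw [hab]
    rw [inv_le_inv₀ (by exact_mod_cast Nat.succ_pos _) (by norm_num)]
    exact_mod_cast (by have := hb j; omega : 3 ≤ 2 * b j + 1)
  have hx0 : ∀ j, 0 < a j ^ n := fun j => pow_pos (ha0 j) n
  have hx3 : ∀ j, a j ^ n ≤ 3⁻¹ := by
    intro j
    calc a j ^ n ≤ a j ^ 1 := pow_le_pow_of_le_one (ha0 j).le (by linarith [ha3 j]) hn
      _ = a j := pow_one _
      _ ≤ 3⁻¹ := ha3 j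
  set r : ℕ → ℝ := fun m => ∏ j ∈ Finset.range m, (1 - a j ^ n) with hrdef
  have hr_pos : ∀ m, 0 < r m :=
    fun m => Finset.prod_pos fun j _ => by have := hx3 j; norm_num; linarith
  have hr_anti : Antitone r := by
    apply antitone_nat_of_succ_le
    intro m
    rw [hrdef]
    simp only [Finset.prod_range_succ]
    have h1 : 1 - a m ^ n ≤ 1 := by have := hx0 m; linarith
    have h2 : 0 ≤ 1 - a m ^ n := by have := hx3 m; norm_num; linarith
    exact mul_le_of_le_one_right (hr_pos m).le h1
  -- volume of precarpets
  have hvol : ∀ m, volume (precarpet n b m) = ENNReal.ofReal (r m) := by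
    intro m
    obtain ⟨F, -, -, -, h⟩ := carpet_struct n b m
    rw [h]
    congr 1
    exact Finset.prod_congr rfl fun j _ => by rw [hab]
  have hmeas : ∀ m, MeasurableSet (precarpet n b m) := by
    intro m
    obtain ⟨F, hcoe, -, -, -⟩ := carpet_struct n b m
    rw [precarpet, hcoe]
    exact MeasurableSet.biUnion F.countable_toSet fun p _ => measurableSet_Icc
  -- antitone precarpets
  have hanti : Antitone (precarpet n b) := by
    apply antitone_nat_of_succ_le
    intro m
    obtain ⟨F, hcoe, hside, -, -⟩ := carpet_struct n b m
    intro x hx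
    rw [precarpet, Set.mem_iUnion₂] at hx
    obtain ⟨q, hq, hxq⟩ := hx
    rw [show carpetPieces n b (m+1) = ⋃ p ∈ carpetPieces n b m,
        { q | ∃ v : Fin n → Fin (2 * b m + 1),
          v ≠ (fun _ => ⟨b m, by omega⟩) ∧
          q = (fun i => p.1 i + (v i : ℝ) * (p.2 / (2 * b m + 1)), p.2 / (2 * b m + 1)) }
      from rfl] at hq
    simp only [Set.mem_iUnion, Set.mem_setOf_eq, exists_prop] at hq
    obtain ⟨p, hp, v, hv, rfl⟩ := hq
    have hp2 : (0:ℝ) ≤ p.2 := by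
      rw [hside p (by rwa [hcoe] at hp)]
      exact (Finset.prod_pos fun j _ => by positivity).le
    have hsub := subCube_subset p.1 hp2 (k := 2 * b m + 1) (by omega) v
    rw [subCube] at hsub
    have hcast : ((2 * b m + 1 : ℕ) : ℝ) = 2 * (b m : ℝ) + 1 := by push_cast; ring
    rw [hcast] at hsub
    have hx' : x ∈ Set.Icc p.1 (fun i => p.1 i + p.2) := hsub hxq
    rw [precarpet]
    exact Set.mem_biUnion hp hx'
  -- limit of measures
  have htend : Tendsto (fun m => ENNReal.ofReal (r m)) atTop
      (nhds (volume (sierpinskiCarpet n b))) := by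
    have := tendsto_measure_iInter_atTop (μ := volume) (s := precarpet n b)
      (fun m => (hmeas m).nullMeasurableSet) hanti
      ⟨0, by rw [hvol 0]; exact ENNReal.ofReal_ne_top⟩
    rw [show (⋂ m, precarpet n b m) = sierpinskiCarpet n b from rfl] at this
    simpa [Function.comp_def, hvol] using this
  -- real limit
  have hbdd : BddBelow (Set.range r) := ⟨0, by rintro y ⟨m, rfl⟩; exact (hr_pos m).le⟩
  have hL : Tendsto r atTop (nhds (⨅ m, r m)) := tendsto_atTop_ciInf hr_anti hbdd
  set L := ⨅ m, r m with hLdef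
  have hL0 : 0 ≤ L := le_ciInf fun m => (hr_pos m).le
  have hcarpet : volume (sierpinskiCarpet n b) = ENNReal.ofReal L :=
    tendsto_nhds_unique htend ((ENNReal.continuous_ofReal.tendsto L).comp hL)
  constructor
  · rw [hcarpet, ENNReal.toReal_ofReal hL0]
    exact hL
  · rw [hcarpet, ENNReal.ofReal_pos]
    constructor
    · intro hLpos
      by_contra hns
      have hnn : ∀ j, 0 ≤ a j ^ n := fun j => (hx0 j).le
      have htop := (not_summable_iff_tendsto_nat_atTop_of_nonneg hnn).mp hns
      have hub : ∀ m, r m ≤ Real.exp (-(∑ j ∈ Finset.range m, a j ^ n)) := by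
        intro m
        have h1 : r m ≤ ∏ j ∈ Finset.range m, Real.exp (-(a j ^ n)) := by
          refine Finset.prod_le_prod (fun j _ => by have := hx3 j; norm_num; linarith)
            (fun j _ => ?_)
          have := Real.add_one_le_exp (-(a j ^ n))
          linarith
        calc r m ≤ ∏ j ∈ Finset.range m, Real.exp (-(a j ^ n)) := h1
          _ = Real.exp (∑ j ∈ Finset.range m, -(a j ^ n)) := (Real.exp_sum _ _).symm
          _ = Real.exp (-(∑ j ∈ Finset.range m, a j ^ n)) := by rw [Finset.sum_neg_distrib]
      have h0 : Tendsto (fun m => Real.exp (-(∑ j ∈ Finset.range m, a j ^ n))) atTop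
          (nhds 0) :=
        Real.tendsto_exp_atBot.comp (tendsto_neg_atBot_iff.mpr htop)
      have hr0 : Tendsto r atTop (nhds 0) :=
        squeeze_zero (fun m => (hr_pos m).le) hub h0
      have : L = 0 := tendsto_nhds_unique hL hr0
      linarith
    · intro hsum
      set C := ∑' j, a j ^ n with hC
      have hlb : ∀ m, Real.exp (-(2 * C)) ≤ r m := by
        intro m
        have h1 : ∏ j ∈ Finset.range m, Real.exp (-(2 * (a j ^ n))) ≤ r m :=
          Finset.prod_le_prod (fun j _ => (Real.exp_pos _).le)
            (fun j _ => exp_neg_two_le (hx0 j).le (hx3 j))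
        have h2 : ∑ j ∈ Finset.range m, a j ^ n ≤ C :=
          Summable.sum_le_tsum _ (fun j _ => (hx0 j).le) hsum
        calc Real.exp (-(2 * C)) ≤ Real.exp (-(2 * ∑ j ∈ Finset.range m, a j ^ n)) := by
              apply Real.exp_le_exp.mpr; linarith
          _ = Real.exp (∑ j ∈ Finset.range m, -(2 * (a j ^ n))) := by
              rw [Finset.sum_neg_distrib, ← Finset.mul_sum]
          _ = ∏ j ∈ Finset.range m, Real.exp (-(2 * (a j ^ n))) := Real.exp_sum _ _
          _ ≤ r m := h1
      have : Real.exp (-(2 * C)) ≤ L := ge_of_tendsto' hL hlb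
      exact lt_of_lt_of_le (Real.exp_pos _) this
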